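/- Let r ≥ 1 be an integer, let α ∈ ℂ with Re α > 0, and let ξ_r := exp(2πi/r). Then for every t > 0, ∑_{m=0}^∞ t^(r·m+α)/Γ(1 + r·m + α) = (1/r)·∑_{k=0}^{r−1} I_α⟨x ↦ exp(ξ_r^k·x)⟩(t). -/

import Mathlib

open MeasureTheory Set

/-- Complex power of a real number via the real logarithm:
`s ^ w := exp (w * log s)`. -/
noncomputable def cpowR (s : ℝ) (w : ℂ) : ℂ := Complex.exp (w * Real.log s)

/-- The Riemann–Liouville integral `I_α⟨f⟩(t) = ∫_0^t f x * (t-x)^(α-1)/Γ(α) dx`. -/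
noncomputable def RL (α : ℂ) (f : ℝ → ℂ) (t : ℝ) : ℂ :=
  ∫ x in (0:ℝ)..t, f x * cpowR (t - x) (α - 1) / Complex.Gamma α

lemma cpowR_eq {s : ℝ} (hs : 0 < s) (w : ℂ) : cpowR s w = (s : ℂ) ^ w := by
  rw [cpowR, Complex.cpow_def_of_ne_zero (by exact_mod_cast hs.ne'),
    ← Complex.ofReal_log hs.le, mul_comm]

lemma key (α : ℂ) (hα : 0 < α.re) {t : ℝ} (ht : 0 < t) (c : ℂ) :
    HasSum (fun n : ℕ => c ^ n * (cpowR t ((n : ℂ) + α) / Complex.Gamma (1 + (n : ℂ) + α)))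
      (RL α (fun x : ℝ => Complex.exp (c * x)) t) := by
  set μ : Measure ℝ := volume.restrict (Ioo 0 t) with hμ
  set F : ℕ → ℝ → ℂ := fun n x =>
    (c * x) ^ n / (n.factorial : ℂ) * (cpowR (t - x) (α - 1) / Complex.Gamma α) with hF
  -- measurability of the base function
  have hmeas : AEStronglyMeasurable (fun x : ℝ => cpowR (t - x) (α - 1)) μ := by
    apply Measurable.aestronglyMeasurable
    unfold cpowR
    exact Complex.measurable_exp.comp
      ((measurable_const.mul (Complex.measurable_ofReal.comp
        (Real.measurable_log.comp (measurable_const.sub measurable_id)))))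
  -- integrability of the base function
  have hbase : Integrable (fun x : ℝ => cpowR (t - x) (α - 1)) μ := by
    have h1 : IntervalIntegrable (fun x : ℝ => ((x : ℝ) : ℂ) ^ (α - 1)) volume 0 t :=
      intervalIntegral.intervalIntegrable_cpow' (by simpa using hα)
    have h2 := (h1.comp_sub_left t).symm
    simp only [sub_zero, sub_self] at h2
    have h3 : IntegrableOn (fun x : ℝ => (((t - x : ℝ)) : ℂ) ^ (α - 1)) (Ioc 0 t) :=
      (intervalIntegrable_iff_integrableOn_Ioc_of_le ht.le).mp h2
    have h4 : IntegrableOn (fun x : ℝ => (((t - x : ℝ)) : ℂ) ^ (α - 1)) (Ioo 0 t) :=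
      h3.mono_set Ioo_subset_Ioc_self
    refine h4.congr ?_
    filter_upwards [ae_restrict_mem measurableSet_Ioo] with x hx
    rw [cpowR_eq (by linarith [hx.2])]
  -- integrability of each F n
  have hF_int : ∀ n : ℕ, Integrable (F n) μ := by
    intro n
    refine Integrable.bdd_mul (c := (‖c‖ * t) ^ n / n.factorial)
      (hbase.div_const _) ?_ ?_
    · exact (((Complex.measurable_ofReal.const_mul c).pow_const n).div_const
        _).aestronglyMeasurable
    · filter_upwards [ae_restrict_mem measurableSet_Ioo] with x hx
      rw [norm_div, norm_pow]
      have h1 : ‖c * (x : ℂ)‖ ≤ ‖c‖ * t := by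
        rw [norm_mul, Complex.norm_real, Real.norm_eq_abs,
          abs_of_pos hx.1]
        exact mul_le_mul_of_nonneg_left hx.2.le (norm_nonneg c)
      have h2 : ‖(n.factorial : ℂ)‖ = (n.factorial : ℝ) := by
        rw [Complex.norm_natCast]
      rw [h2]
      gcongr
  -- summability of the norm integrals
  have hK : 0 ≤ ∫ x, ‖cpowR (t - x) (α - 1) / Complex.Gamma α‖ ∂μ :=
    integral_nonneg fun x => norm_nonneg _
  have hF_sum : Summable fun n : ℕ => ∫ x, ‖F n x‖ ∂μ := by
    refine Summable.of_nonneg_of_le (fun n => integral_nonneg fun x => norm_nonneg _)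
      (fun n => ?_)
      (((Real.summable_pow_div_factorial (‖c‖ * t)).mul_right
        (∫ x, ‖cpowR (t - x) (α - 1) / Complex.Gamma α‖ ∂μ)))
    rw [← integral_const_mul]
    refine integral_mono_ae (hF_int n).norm ?_ ?_
    · exact ((hbase.div_const _).norm.const_mul _)
    · filter_upwards [ae_restrict_mem measurableSet_Ioo] with x hx
      simp only [hF, norm_mul, norm_div, norm_pow]
      have h2 : ‖(n.factorial : ℂ)‖ = (n.factorial : ℝ) := Complex.norm_natCast _
      rw [h2]
      have h1 : ‖c * (x : ℂ)‖ ≤ ‖c‖ * t := by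
        rw [norm_mul, Complex.norm_real, Real.norm_eq_abs, abs_of_pos hx.1]
        exact mul_le_mul_of_nonneg_left hx.2.le (norm_nonneg c)
      gcongr
      all_goals first
        | exact norm_nonneg _
        | exact mul_nonneg (norm_nonneg _) ht.le
        | (rw [Complex.norm_real, Real.norm_eq_abs, abs_of_pos hx.1]; exact hx.2.le)
  have hmain := hasSum_integral_of_summable_integral_norm hF_int hF_sum
  -- identify the integral of the tsum with the RL integral
  have hA : ∫ x, (∑' n, F n x) ∂μ = RL α (fun x : ℝ => Complex.exp (c * x)) t := by
    rw [RL, intervalIntegral.integral_of_le ht.le, ← integral_Ioc_eq_integral_Ioo]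
    congr 1
    funext x
    have hx : ∑' n : ℕ, (c * (x : ℂ)) ^ n / (n.factorial : ℂ) = Complex.exp (c * x) := by
      rw [Complex.exp_eq_exp_ℂ]
      exact (NormedSpace.expSeries_div_hasSum_exp (c * (x : ℂ))).tsum_eq
    simp only [hF]
    rw [tsum_mul_right, hx, mul_div_assoc]
  rw [hA] at hmain
  -- identify each term
  have hB : ∀ n : ℕ, (∫ x, F n x ∂μ)
      = c ^ n * (cpowR t ((n : ℂ) + α) / Complex.Gamma (1 + (n : ℂ) + α)) := by
    intro n
    have hne : Complex.Gamma ((n : ℂ) + 1 + α) ≠ 0 := by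
      apply Complex.Gamma_ne_zero_of_re_pos
      simp only [Complex.add_re, Complex.natCast_re, Complex.one_re]
      positivity
    have hne2 : Complex.Gamma α ≠ 0 :=
      Complex.Gamma_ne_zero_of_re_pos hα
    have hfac : (n.factorial : ℂ) ≠ 0 := by exact_mod_cast n.factorial_ne_zero
    have hbeta : Complex.betaIntegral ((n : ℂ) + 1) α
        = (n.factorial : ℂ) * Complex.Gamma α / Complex.Gamma ((n : ℂ) + 1 + α) := by
      have := Complex.Gamma_mul_Gamma_eq_betaIntegral
        (s := (n : ℂ) + 1) (t := α) (by simp [Complex.add_re]; positivity) hα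
      rw [Complex.Gamma_nat_eq_factorial] at this
      rw [this, mul_div_cancel_left₀ _ hne]
    have hint : ∫ x, ((x : ℂ) ^ n * cpowR (t - x) (α - 1)) ∂μ
        = (t : ℂ) ^ ((n : ℂ) + 1 + α - 1) * Complex.betaIntegral ((n : ℂ) + 1) α := by
      rw [← Complex.betaIntegral_scaled ((n : ℂ) + 1) α ht,
        intervalIntegral.integral_of_le ht.le, integral_Ioc_eq_integral_Ioo]
      refine integral_congr_ae ?_
      filter_upwards [ae_restrict_mem measurableSet_Ioo] with x hx
      rw [cpowR_eq (by linarith [hx.2]), add_sub_cancel_right, Complex.cpow_natCast,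
        Complex.ofReal_sub]
    have : (fun x : ℝ => F n x)
        = fun x : ℝ => (c ^ n / (n.factorial : ℂ) / Complex.Gamma α)
          * ((x : ℂ) ^ n * cpowR (t - x) (α - 1)) := by
      funext x
      simp only [hF]
      ring
    rw [this, integral_const_mul, hint, hbeta]
    have he : (n : ℂ) + 1 + α - 1 = (n : ℂ) + α := by ring
    have hg : Complex.Gamma (1 + (n : ℂ) + α) = Complex.Gamma ((n : ℂ) + 1 + α) := by
      ring_nf
    rw [he, hg, cpowR_eq ht]
    field_simp
  rw [funext hB] at hmain
  exact hmain

theorem stmt1 (r : ℕ) (hr : 1 ≤ r) (α : ℂ) (hα : 0 < α.re) (t : ℝ) (ht : 0 < t) :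
    ∑' m : ℕ, cpowR t ((r : ℂ) * m + α) / Complex.Gamma (1 + (r : ℂ) * m + α)
      = (1 / (r : ℂ)) * ∑ k ∈ Finset.range r,
          RL α (fun x : ℝ =>
            Complex.exp (Complex.exp (2 * Real.pi * Complex.I / r) ^ k * x)) t := by
  have hr0 : r ≠ 0 := Nat.one_le_iff_ne_zero.mp hr
  have hrC : (r : ℂ) ≠ 0 := Nat.cast_ne_zero.mpr hr0
  set ξ : ℂ := Complex.exp (2 * Real.pi * Complex.I / r) with hξ
  have hprim : IsPrimitiveRoot ξ r := Complex.isPrimitiveRoot_exp r hr0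
  set f : ℕ → ℂ := fun n => cpowR t ((n : ℂ) + α) / Complex.Gamma (1 + (n : ℂ) + α) with hf
  set S : ℂ := ∑ k ∈ Finset.range r, RL α (fun x : ℝ => Complex.exp (ξ ^ k * x)) t with hS
  have hroot : ∀ n : ℕ, (∑ k ∈ Finset.range r, (ξ ^ n) ^ k)
      = if r ∣ n then (r : ℂ) else 0 := by
    intro n
    by_cases hdvd : r ∣ n
    · rw [if_pos hdvd, (hprim.pow_eq_one_iff_dvd n).mpr hdvd]
      simp
    · rw [if_neg hdvd]
      have hne1 : ξ ^ n ≠ 1 := fun h => hdvd ((hprim.pow_eq_one_iff_dvd n).mp h)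
      rw [geom_sum_eq hne1]
      have : (ξ ^ n) ^ r = 1 := by
        rw [← pow_mul, mul_comm, pow_mul, hprim.pow_eq_one, one_pow]
      rw [this, sub_self, zero_div]
  have hsum : HasSum (fun n : ℕ => (if r ∣ n then (r : ℂ) else 0) * f n) S := by
    have h1 : HasSum (fun n : ℕ => ∑ k ∈ Finset.range r, (ξ ^ k) ^ n * f n) S :=
      hasSum_sum fun k _ => key α hα ht (ξ ^ k)
    refine h1.congr_fun fun n => ?_
    rw [← Finset.sum_mul, ← hroot n]
    congr 1
    exact Finset.sum_congr rfl fun k _ => by rw [← pow_mul, ← pow_mul, mul_comm]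
  have hinj : Function.Injective (fun m : ℕ => r * m) := fun a b h =>
    Nat.eq_of_mul_eq_mul_left (Nat.pos_of_ne_zero hr0) h
  have hzero : ∀ n ∉ Set.range (fun m : ℕ => r * m),
      (if r ∣ n then (r : ℂ) else 0) * f n = 0 := by
    intro n hn
    rw [if_neg, zero_mul]
    rintro ⟨m, rfl⟩
    exact hn ⟨m, rfl⟩
  have h2 : HasSum ((fun n : ℕ => (if r ∣ n then (r : ℂ) else 0) * f n)
      ∘ fun m : ℕ => r * m) S := (hinj.hasSum_iff hzero).mpr hsum
  have h3 : HasSum (fun m : ℕ =>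
      cpowR t ((r : ℂ) * m + α) / Complex.Gamma (1 + (r : ℂ) * m + α)) ((1 / (r : ℂ)) * S) := by
    have h4 := h2.mul_left ((r : ℂ))⁻¹
    rw [one_div]
    refine h4.congr_fun fun m => ?_
    simp only [Function.comp, hf]
    rw [if_pos ⟨m, rfl⟩]
    push_cast
    field_simp
  exact h3.tsum_eq
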